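/- Let (X,d,m) be a finite measured metric space and suppose that for all R > 0 the cardinality of every closed ball of radius R is bounded by N_R. Given R > 0 and s ∈ (0,1), there exists a subset Y ⊆ X such that: (1) for all x, y ∈ Y with d(x,y) ≤ R one has s·m(x) ≤ m(y) ≤ m(x)/s; and (2) m(X \ Y) ≤ s·N_R·m(Y). -/

import Mathlib

open scoped Classical
open Finset

noncomputable def buildY {X : Type*} [MetricSpace X] (R s : ℝ) (m : X → ℝ) :
    List X → Finset X
  | [] => ∅
  | x :: l =>
      let Y := buildY R s m l
      if ∀ y ∈ Y, dist x y ≤ R → s * m y ≤ m x then insert x Y else Y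

lemma buildY_subset {X : Type*} [MetricSpace X] (R s : ℝ) (m : X → ℝ) :
    ∀ l : List X, ∀ x ∈ buildY R s m l, x ∈ l := by
  intro l
  induction l with
  | nil => simp [buildY]
  | cons a l ih =>
    intro x hx
    simp only [buildY] at hx
    split at hx
    · rcases Finset.mem_insert.mp hx with h | h
      · simp [h]
      · simp [ih x h]
    · simp [ih x hx]

lemma buildY_prop1 {X : Type*} [MetricSpace X] {R s : ℝ} {m : X → ℝ}
    (hs0 : 0 < s) (hs1 : s ≤ 1) (hm0 : ∀ x, 0 ≤ m x) :
    ∀ l : List X, l.Pairwise (fun a b => m a ≤ m b) →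
      ∀ x ∈ buildY R s m l, ∀ y ∈ buildY R s m l,
        dist x y ≤ R → s * m x ≤ m y ∧ m y ≤ m x / s := by
  intro l
  induction l with
  | nil => simp [buildY]
  | cons a l ih =>
    intro hsort x hx y hy hd
    have hsl : l.Pairwise (fun a b => m a ≤ m b) := hsort.of_cons
    have hle : ∀ z ∈ l, m a ≤ m z := fun z hz => List.rel_of_pairwise_cons hsort hz
    by_cases hcond : ∀ y ∈ buildY R s m l, dist a y ≤ R → s * m y ≤ m a
    · simp only [buildY, if_pos hcond] at hx hy
      rcases Finset.mem_insert.mp hx with hxa | hxY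
      · rcases Finset.mem_insert.mp hy with hya | hyY
        · subst hxa hya
          refine ⟨by nlinarith [hm0 y], ?_⟩
          rw [le_div_iff₀ hs0]; nlinarith [hm0 y]
        · subst hxa
          have h1 : m x ≤ m y := hle y (buildY_subset R s m l y hyY)
          have h2 : s * m y ≤ m x := hcond y hyY hd
          refine ⟨by nlinarith [hm0 x], ?_⟩
          rw [le_div_iff₀ hs0]; linarith
      · rcases Finset.mem_insert.mp hy with hya | hyY
        · subst hya
          have h1 : m y ≤ m x := hle x (buildY_subset R s m l x hxY)
          have h2 : s * m x ≤ m y := hcond x hxY (by rwa [dist_comm])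
          refine ⟨h2, ?_⟩
          rw [le_div_iff₀ hs0]; nlinarith [hm0 x]
        · exact ih hsl x hxY y hyY hd
    · simp only [buildY, if_neg hcond] at hx hy
      exact ih hsl x hx y hy hd

lemma buildY_prop2 {X : Type*} [MetricSpace X] {R s : ℝ} {m : X → ℝ} :
    ∀ l : List X, ∀ x ∈ l, x ∉ buildY R s m l →
      ∃ y ∈ buildY R s m l, dist x y ≤ R ∧ m x ≤ s * m y := by
  intro l
  induction l with
  | nil => simp
  | cons a l ih =>
    intro x hx hnot
    by_cases hcond : ∀ y ∈ buildY R s m l, dist a y ≤ R → s * m y ≤ m a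
    · simp only [buildY, if_pos hcond] at hnot ⊢
      rcases List.mem_cons.mp hx with rfl | hxl
      · exact absurd (Finset.mem_insert_self _ _) hnot
      · have hxnot : x ∉ buildY R s m l := fun h => hnot (Finset.mem_insert_of_mem h)
        obtain ⟨y, hy, hdy, hmy⟩ := ih x hxl hxnot
        exact ⟨y, Finset.mem_insert_of_mem hy, hdy, hmy⟩
    · simp only [buildY, if_neg hcond] at hnot ⊢
      rcases List.mem_cons.mp hx with rfl | hxl
      · push_neg at hcond
        obtain ⟨y, hy, hdy, hmy⟩ := hcond
        exact ⟨y, hy, hdy, le_of_lt hmy⟩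
      · exact ih x hxl hnot

/-- existence of a subspace with bounded measure ratios at scale R,
whose complement has small measure. -/
theorem stmt1 {X : Type*} [Fintype X] [Nonempty X] [MetricSpace X]
    (m : X → ℝ) (hm0 : ∀ x, 0 ≤ m x) (hm : 0 < ∑ x, m x)
    (R s : ℝ) (hR : 0 < R) (hs : s ∈ Set.Ioo (0:ℝ) 1)
    (NR : ℕ) (hNR : ∀ x : X, (univ.filter (fun y => dist x y ≤ R)).card ≤ NR) :
    ∃ Y : Finset X,
      (∀ x ∈ Y, ∀ y ∈ Y, dist x y ≤ R → s * m x ≤ m y ∧ m y ≤ m x / s) ∧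
      ∑ x ∈ univ \ Y, m x ≤ s * NR * ∑ x ∈ Y, m x := by
  obtain ⟨hs0, hs1⟩ := hs
  set L : List X := (univ : Finset X).toList.mergeSort (fun a b => decide (m a ≤ m b)) with hL
  have htrans : ∀ a b c : X, (decide (m a ≤ m b)) → (decide (m b ≤ m c)) →
      (decide (m a ≤ m c)) := by
    intro a b c h1 h2
    simp only [decide_eq_true_eq] at *
    exact le_trans h1 h2
  have htotal : ∀ a b : X, (decide (m a ≤ m b)) || (decide (m b ≤ m a)) := by
    intro a b
    rcases le_total (m a) (m b) with h | h <;> simp [h]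
  have hLsorted : L.Pairwise (fun a b => m a ≤ m b) := by
    have := List.pairwise_mergeSort (le := fun a b => decide (m a ≤ m b)) htrans htotal
      (univ : Finset X).toList
    exact this.imp (fun h => by simpa using h)
  have hLmem : ∀ x : X, x ∈ L := by
    intro x
    have hperm := List.mergeSort_perm (univ : Finset X).toList
      (fun a b => decide (m a ≤ m b))
    rw [hL, hperm.mem_iff]
    simp
  set Y : Finset X := buildY R s m L with hY
  refine ⟨Y, buildY_prop1 hs0 hs1.le hm0 L hLsorted, ?_⟩
  set S : Finset X := univ \ Y with hS
  have hwit : ∀ x ∈ S, ∃ y, y ∈ Y ∧ dist x y ≤ R ∧ m x ≤ s * m y := by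
    intro x hx
    have hxnot : x ∉ Y := (Finset.mem_sdiff.mp hx).2
    obtain ⟨y, hy, h1, h2⟩ := buildY_prop2 L x (hLmem x) hxnot
    exact ⟨y, hy, h1, h2⟩
  classical
  let g : X → X := fun x =>
    if h : ∃ y, y ∈ Y ∧ dist x y ≤ R ∧ m x ≤ s * m y then h.choose else x
  have hg : ∀ x ∈ S, g x ∈ Y ∧ dist x (g x) ≤ R ∧ m x ≤ s * m (g x) := by
    intro x hx
    have h := hwit x hx
    simp only [g, dif_pos h]
    exact h.choose_spec
  have hmaps : ∀ x ∈ S, g x ∈ Y := fun x hx => (hg x hx).1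
  have step1 : ∑ x ∈ S, m x ≤ ∑ x ∈ S, s * m (g x) :=
    Finset.sum_le_sum fun x hx => (hg x hx).2.2
  have step2 : ∑ x ∈ S, s * m (g x) = s * ∑ x ∈ S, m (g x) := by
    rw [Finset.mul_sum]
  have step3 : ∑ x ∈ S, m (g x) = ∑ y ∈ Y, ∑ x ∈ S.filter (fun x => g x = y), m (g x) :=
    (Finset.sum_fiberwise_of_maps_to hmaps _).symm
  have step4 : ∀ y ∈ Y, ∑ x ∈ S.filter (fun x => g x = y), m (g x) ≤ (NR : ℝ) * m y := by
    intro y hy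
    have heq : ∑ x ∈ S.filter (fun x => g x = y), m (g x)
        = (S.filter (fun x => g x = y)).card • m y := by
      rw [Finset.sum_congr rfl (fun x hx => by
        rw [(Finset.mem_filter.mp hx).2]), Finset.sum_const]
    rw [heq, nsmul_eq_mul]
    have hcard : (S.filter (fun x => g x = y)).card ≤ NR := by
      refine le_trans (Finset.card_le_card ?_) (hNR y)
      intro x hx
      obtain ⟨hxS, hxg⟩ := Finset.mem_filter.mp hx
      have := (hg x hxS).2.1
      rw [hxg] at this
      simp only [Finset.mem_filter, Finset.mem_univ, true_and]
      rwa [dist_comm]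
    exact mul_le_mul_of_nonneg_right (by exact_mod_cast hcard) (hm0 y)
  calc ∑ x ∈ univ \ Y, m x = ∑ x ∈ S, m x := rfl
    _ ≤ ∑ x ∈ S, s * m (g x) := step1
    _ = s * ∑ x ∈ S, m (g x) := step2
    _ = s * ∑ y ∈ Y, ∑ x ∈ S.filter (fun x => g x = y), m (g x) := by rw [step3]
    _ ≤ s * ∑ y ∈ Y, (NR : ℝ) * m y := by
        apply mul_le_mul_of_nonneg_left (Finset.sum_le_sum step4) hs0.le
    _ = s * NR * ∑ y ∈ Y, m y := by rw [← Finset.mul_sum, ← mul_assoc]
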